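/- Asymptotics of the Gamma-ratio sum, case 2λμ < 1 (Lemma 6, third case): Let λ > 0 and μ > 0 with 0 < λμ < 1/2. Then the series ∑_{j=1}^∞ ( Γ(j) / Γ(j+1−λμ) )² converges, and its tails satisfy ∑_{j=i}^∞ ( Γ(j) / Γ(j+1−λμ) )² = Θ(i^{2λμ−1}) as i → ∞, i.e. there exist constants c₁, c₂ > 0 and an integer i₀ such that c₁ i^{2λμ−1} ≤ ∑_{j=i}^∞ (Γ(j)/Γ(j+1−λμ))² ≤ c₂ i^{2λμ−1} for all i ≥ i₀. -/

import Mathlib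

lemma ratio_bounds (s x : ℝ) (hs0 : 0 < s) (hs1 : s < 1) (hx : 1 ≤ x) :
    x ^ (-s) ≤ Real.Gamma x / Real.Gamma (x + s) ∧
    Real.Gamma x / Real.Gamma (x + s) ≤ 2 * x ^ (-s) := by
  have hx0 : (0:ℝ) < x := lt_of_lt_of_le one_pos hx
  have hΓx : 0 < Real.Gamma x := Real.Gamma_pos_of_pos hx0
  have hxs0 : (0:ℝ) < x + s := by linarith
  have hΓxs : 0 < Real.Gamma (x + s) := Real.Gamma_pos_of_pos hxs0
  have cx := Real.convexOn_log_Gamma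
  -- G1 : Γ(x+s) ≤ Γ x * x ^ s
  have h1 : Real.Gamma (x + s) ≤ Real.Gamma x * x ^ s := by
    have key := cx.2 (Set.mem_Ioi.2 hx0) (Set.mem_Ioi.2 (by linarith : (0:ℝ) < x + 1))
      (by linarith : (0:ℝ) ≤ 1 - s) hs0.le (by ring)
    simp only [smul_eq_mul, Function.comp_apply] at key
    have harg : (1 - s) * x + s * (x + 1) = x + s := by ring
    rw [harg, Real.Gamma_add_one (ne_of_gt hx0), Real.log_mul (ne_of_gt hx0) (ne_of_gt hΓx)]
      at key
    have key2 : Real.log (Real.Gamma (x + s)) ≤ Real.log (Real.Gamma x) + s * Real.log x := by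
      nlinarith [key]
    calc Real.Gamma (x + s) = Real.exp (Real.log (Real.Gamma (x + s))) := (Real.exp_log hΓxs).symm
      _ ≤ Real.exp (Real.log (Real.Gamma x) + s * Real.log x) := Real.exp_le_exp.2 key2
      _ = Real.Gamma x * x ^ s := by
          rw [Real.exp_add, Real.exp_log hΓx, Real.rpow_def_of_pos hx0, mul_comm (Real.log x) s]
  -- G2 : Γ x * x ≤ Γ(x+s) * (x+s)^(1-s)
  have h2 : Real.Gamma x * x ≤ Real.Gamma (x + s) * (x + s) ^ (1 - s) := by
    have key := cx.2 (Set.mem_Ioi.2 hxs0) (Set.mem_Ioi.2 (by linarith : (0:ℝ) < x + s + 1))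
      hs0.le (by linarith : (0:ℝ) ≤ 1 - s) (by ring)
    simp only [smul_eq_mul, Function.comp_apply] at key
    have harg : s * (x + s) + (1 - s) * (x + s + 1) = x + 1 := by ring
    rw [harg, Real.Gamma_add_one (ne_of_gt hxs0),
      Real.log_mul (ne_of_gt hxs0) (ne_of_gt hΓxs)] at key
    have key2 : Real.log (Real.Gamma (x + 1)) ≤
        Real.log (Real.Gamma (x + s)) + (1 - s) * Real.log (x + s) := by nlinarith [key]
    have e1 : Real.Gamma x * x = Real.Gamma (x + 1) := by
      rw [Real.Gamma_add_one (ne_of_gt hx0)]; ring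
    rw [e1]
    calc Real.Gamma (x + 1) = Real.exp (Real.log (Real.Gamma (x + 1))) :=
          (Real.exp_log (Real.Gamma_pos_of_pos (by linarith))).symm
      _ ≤ Real.exp (Real.log (Real.Gamma (x + s)) + (1 - s) * Real.log (x + s)) :=
          Real.exp_le_exp.2 key2
      _ = Real.Gamma (x + s) * (x + s) ^ (1 - s) := by
          rw [Real.exp_add, Real.exp_log hΓxs, Real.rpow_def_of_pos hxs0,
            mul_comm (Real.log (x + s)) (1 - s)]
  constructor
  · rw [Real.rpow_neg hx0.le, inv_eq_one_div, div_le_div_iff₀ (by positivity) hΓxs]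
    calc 1 * Real.Gamma (x + s) = Real.Gamma (x + s) := one_mul _
      _ ≤ Real.Gamma x * x ^ s := h1
  · rw [div_le_iff₀ hΓxs]
    have step : Real.Gamma x ≤ Real.Gamma (x + s) * (x + s) ^ (1 - s) / x := by
      rw [le_div_iff₀ hx0]; exact h2
    have hb : (x + s) ^ (1 - s) ≤ 2 * x ^ (1 - s) := by
      calc (x + s) ^ (1 - s) ≤ (2 * x) ^ (1 - s) :=
            Real.rpow_le_rpow hxs0.le (by linarith) (by linarith)
        _ = 2 ^ (1 - s) * x ^ (1 - s) := Real.mul_rpow (by norm_num) hx0.le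
        _ ≤ 2 * x ^ (1 - s) := by
            have : (2:ℝ) ^ (1 - s) ≤ 2 ^ (1:ℝ) :=
              Real.rpow_le_rpow_of_exponent_le (by norm_num) (by linarith)
            rw [Real.rpow_one] at this
            exact mul_le_mul_of_nonneg_right this (Real.rpow_nonneg hx0.le _)
    have hxx : x ^ (1 - s) / x = x ^ (-s) := by
      rw [show (1:ℝ) - s = -s + 1 by ring, Real.rpow_add hx0, Real.rpow_one]
      field_simp
    calc Real.Gamma x ≤ Real.Gamma (x + s) * (x + s) ^ (1 - s) / x := step
      _ ≤ Real.Gamma (x + s) * (2 * x ^ (1 - s)) / x := by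
          gcongr
      _ = 2 * x ^ (-s) * Real.Gamma (x + s) := by
          rw [← hxx]; ring


lemma bern (q x : ℝ) (hq : 0 < q) (hx : 0 < x) :
    q * (x + 1) ^ (-(q + 1)) ≤ x ^ (-q) - (x + 1) ^ (-q) := by
  have hx1 : (0:ℝ) < x + 1 := by linarith
  have hu0 : (0:ℝ) < x / (x + 1) := by positivity
  have hb : 1 + q * (1 - x / (x + 1)) ≤ (x / (x + 1)) ^ (-q) := by
    rw [Real.rpow_def_of_pos hu0]
    have hl : Real.log (x / (x + 1)) ≤ x / (x + 1) - 1 := Real.log_le_sub_one_of_pos hu0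
    have he := Real.add_one_le_exp (Real.log (x / (x + 1)) * (-q))
    nlinarith [mul_le_mul_of_nonneg_left hl hq.le]
  have h1u : 1 - x / (x + 1) = (x + 1)⁻¹ := by field_simp; ring
  rw [h1u] at hb
  have hxe : x ^ (-q) = (x / (x + 1)) ^ (-q) * (x + 1) ^ (-q) := by
    rw [← Real.mul_rpow hu0.le hx1.le, div_mul_cancel₀ _ (ne_of_gt hx1)]
  have hpe : (x + 1) ^ (-(q + 1)) = (x + 1) ^ (-q) * (x + 1)⁻¹ := by
    rw [show -(q + 1) = -q + (-1) by ring, Real.rpow_add hx1, Real.rpow_neg_one]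
  have hp : (0:ℝ) < (x + 1) ^ (-q) := Real.rpow_pos_of_pos hx1 _
  rw [hxe, hpe]
  have key := mul_le_mul_of_nonneg_right hb hp.le
  nlinarith [key]

lemma tel (q i : ℝ) (hq : 0 < q) (hi : 0 < i) (n : ℕ) :
    ∑ j ∈ Finset.range n, (i + j + 1) ^ (-(q + 1)) ≤ (1 / q) * (i ^ (-q) - (i + n) ^ (-q)) := by
  induction n with
  | zero => simp
  | succ n ih =>
    rw [Finset.sum_range_succ]
    have hb := bern q (i + n) hq (by positivity)
    have h2 : (i + (n:ℝ) + 1) ^ (-(q + 1)) ≤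
        (1 / q) * ((i + n) ^ (-q) - (i + n + 1) ^ (-q)) := by
      rw [one_div, inv_mul_eq_div, le_div_iff₀ hq]
      nlinarith [hb]
    have hcast : ((n + 1 : ℕ) : ℝ) = (n : ℝ) + 1 := by push_cast; ring
    rw [hcast]
    have e1 : i + ((n:ℝ) + 1) = i + n + 1 := by ring
    rw [e1]
    nlinarith [ih, h2]

lemma tail_sum_le (q i : ℝ) (hq : 0 < q) (hi : 1 ≤ i) (n : ℕ) :
    ∑ j ∈ Finset.range n, (i + j) ^ (-(q + 1)) ≤ (1 + 1 / q) * i ^ (-q) := by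
  have hi0 : (0:ℝ) < i := by linarith
  have hiq : (0:ℝ) < i ^ (-q) := Real.rpow_pos_of_pos hi0 _
  cases n with
  | zero => simp; positivity
  | succ n =>
    rw [Finset.sum_range_succ']
    have h0 : (i + ((0:ℕ):ℝ)) ^ (-(q + 1)) ≤ i ^ (-q) := by
      push_cast
      rw [add_zero]
      exact Real.rpow_le_rpow_of_exponent_le hi (by linarith)
    have hrest : ∑ j ∈ Finset.range n, (i + (↑j + 1)) ^ (-(q + 1)) ≤ (1 / q) * i ^ (-q) := by
      have htel := tel q i hq hi0 n
      have hpos : (0:ℝ) ≤ (i + n) ^ (-q) := (Real.rpow_pos_of_pos (by positivity) _).le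
      calc ∑ j ∈ Finset.range n, (i + ((j:ℝ) + 1)) ^ (-(q + 1))
          = ∑ j ∈ Finset.range n, (i + j + 1) ^ (-(q + 1)) := by
            apply Finset.sum_congr rfl; intro j _; ring_nf
        _ ≤ (1 / q) * (i ^ (-q) - (i + n) ^ (-q)) := htel
        _ ≤ (1 / q) * i ^ (-q) := by
            apply mul_le_mul_of_nonneg_left _ (by positivity)
            linarith
    have hrw : ∀ j : ℕ, (i + ((j + 1 : ℕ) : ℝ)) ^ (-(q + 1)) =
        (i + ((j:ℝ) + 1)) ^ (-(q + 1)) := by intro j; push_cast; ring_nf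
    simp only [hrw]
    have hadd := add_le_add hrest h0
    linarith [hadd]

lemma term_bounds (a : ℝ) (ha0 : 0 < a) (ha : a < 1 / 2) (n : ℕ) (hn : 1 ≤ n) :
    (n:ℝ) ^ (-(2 - 2 * a)) ≤ (Real.Gamma n / Real.Gamma ((n:ℝ) + 1 - a)) ^ 2 ∧
    (Real.Gamma n / Real.Gamma ((n:ℝ) + 1 - a)) ^ 2 ≤ 4 * (n:ℝ) ^ (-(2 - 2 * a)) := by
  have hx : (1:ℝ) ≤ n := by exact_mod_cast hn
  have hx0 : (0:ℝ) < n := by linarith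
  obtain ⟨h1, h2⟩ := ratio_bounds (1 - a) n (by linarith) (by linarith) hx
  have harg : (n:ℝ) + (1 - a) = (n:ℝ) + 1 - a := by ring
  rw [harg] at h1 h2
  have hr0 : 0 ≤ Real.Gamma n / Real.Gamma ((n:ℝ) + 1 - a) :=
    div_nonneg (Real.Gamma_pos_of_pos hx0).le (Real.Gamma_pos_of_pos (by linarith)).le
  have hsq : ((n:ℝ) ^ (-(1 - a))) ^ 2 = (n:ℝ) ^ (-(2 - 2 * a)) := by
    rw [sq, ← Real.rpow_add hx0]
    congr 1; ring
  constructor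
  · rw [← hsq]; exact pow_le_pow_left₀ (by positivity) h1 2
  · calc (Real.Gamma n / Real.Gamma ((n:ℝ) + 1 - a)) ^ 2
        ≤ (2 * (n:ℝ) ^ (-(1 - a))) ^ 2 := pow_le_pow_left₀ hr0 h2 2
      _ = 4 * (n:ℝ) ^ (-(2 - 2 * a)) := by rw [mul_pow, ← hsq]; norm_num

/-- **Asymptotics of the Gamma-ratio sum, case `2λμ < 1`** (Lemma 6, third case):
the series `∑_{j=1}^∞ (Γ(j)/Γ(j+1−λμ))²` converges and its tails
`∑_{j=i}^∞ (Γ(j)/Γ(j+1−λμ))²` are `Θ(i^{2λμ−1})` as `i → ∞`. -/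
theorem gamma_ratio_sum_asymptotics_lt (lam mu : ℝ) (hlam : 0 < lam) (hmu : 0 < mu)
    (h : lam * mu < 1 / 2) :
    Summable (fun j : ℕ =>
      (Real.Gamma ((j : ℝ) + 1) / Real.Gamma ((j : ℝ) + 1 + 1 - lam * mu)) ^ 2) ∧
    ∃ c₁ : ℝ, 0 < c₁ ∧ ∃ c₂ : ℝ, 0 < c₂ ∧ ∃ i₀ : ℕ, ∀ i : ℕ, i₀ ≤ i →
      c₁ * (i : ℝ) ^ (2 * lam * mu - 1) ≤
        (∑' j : ℕ, (Real.Gamma (((i + j : ℕ)) : ℝ) /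
          Real.Gamma (((i + j : ℕ) : ℝ) + 1 - lam * mu)) ^ 2) ∧
      (∑' j : ℕ, (Real.Gamma (((i + j : ℕ)) : ℝ) /
          Real.Gamma (((i + j : ℕ) : ℝ) + 1 - lam * mu)) ^ 2) ≤
        c₂ * (i : ℝ) ^ (2 * lam * mu - 1) := by
  have ha0 : 0 < lam * mu := mul_pos hlam hmu
  set a := lam * mu with ha_def
  have hq0 : (0:ℝ) < 1 - 2 * a := by linarith
  set F : ℕ → ℝ := fun n => (Real.Gamma n / Real.Gamma ((n:ℝ) + 1 - a)) ^ 2 with hF_def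
  have hF0 : ∀ n, 0 ≤ F n := fun n => sq_nonneg _
  have hFlow : ∀ n : ℕ, 1 ≤ n → (n:ℝ) ^ (-(2 - 2 * a)) ≤ F n :=
    fun n hn => (term_bounds a ha0 h n hn).1
  have hFhigh : ∀ n : ℕ, 1 ≤ n → F n ≤ 4 * (n:ℝ) ^ (-(2 - 2 * a)) :=
    fun n hn => (term_bounds a ha0 h n hn).2
  -- Summability
  have hsumg : Summable (fun n : ℕ => (n:ℝ) ^ (-(2 - 2 * a))) :=
    Real.summable_nat_rpow.2 (by linarith)
  have hsumF1 : Summable (fun n : ℕ => F (n + 1)) := by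
    apply Summable.of_nonneg_of_le (fun n => hF0 _)
      (fun n => hFhigh (n + 1) (Nat.le_add_left 1 n))
    exact ((summable_nat_add_iff 1).2 hsumg).mul_left 4
  have hsumF : Summable F := (summable_nat_add_iff 1).1 hsumF1
  have hmain : Summable (fun j : ℕ =>
      (Real.Gamma ((j : ℝ) + 1) / Real.Gamma ((j : ℝ) + 1 + 1 - a)) ^ 2) := by
    apply hsumF1.congr
    intro j
    simp only [hF_def]
    push_cast
    norm_num
  refine ⟨hmain, (2:ℝ) ^ (-(2 - 2 * a)), Real.rpow_pos_of_pos two_pos _,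
    4 * (1 + 1 / (1 - 2 * a)), by positivity, 1, ?_⟩
  intro i hi
  have hi0 : (0:ℝ) < i := by exact_mod_cast hi
  have hi1 : (1:ℝ) ≤ i := by exact_mod_cast hi
  have hFi : Summable (fun j : ℕ => F (i + j)) := by
    apply ((summable_nat_add_iff i).2 hsumF).congr
    intro j
    rw [add_comm]
  have hexp : 2 * lam * mu - 1 = -(1 - 2 * a) := by rw [ha_def]; ring
  have hgoal_eq : ∀ j : ℕ, (Real.Gamma (((i + j : ℕ)) : ℝ) /
      Real.Gamma (((i + j : ℕ) : ℝ) + 1 - a)) ^ 2 = F (i + j) := fun _ => rfl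
  rw [hexp]
  constructor
  · -- lower bound
    have hsum_le : ∑ j ∈ Finset.range i, F (i + j) ≤ ∑' j : ℕ, F (i + j) :=
      Summable.sum_le_tsum _ (fun j _ => hF0 _) hFi
    have hterm : ∀ j ∈ Finset.range i, (2 * (i:ℝ)) ^ (-(2 - 2 * a)) ≤ F (i + j) := by
      intro j hj
      have hj' : j < i := Finset.mem_range.1 hj
      have h1n : 1 ≤ i + j := le_trans hi (Nat.le_add_right i j)
      refine le_trans ?_ (hFlow (i + j) h1n)
      apply Real.rpow_le_rpow_of_nonpos (by positivity) ?_ (by linarith)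
      push_cast
      have : (j:ℝ) ≤ i := by exact_mod_cast hj'.le
      linarith
    have hcard : (i:ℝ) * (2 * (i:ℝ)) ^ (-(2 - 2 * a)) ≤ ∑ j ∈ Finset.range i, F (i + j) := by
      have := Finset.card_nsmul_le_sum (Finset.range i) (fun j => F (i + j))
        ((2 * (i:ℝ)) ^ (-(2 - 2 * a))) hterm
      simpa [nsmul_eq_mul] using this
    have heq : (2:ℝ) ^ (-(2 - 2 * a)) * (i:ℝ) ^ (-(1 - 2 * a)) =
        (i:ℝ) * (2 * (i:ℝ)) ^ (-(2 - 2 * a)) := by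
      rw [Real.mul_rpow (by norm_num) hi0.le,
        show -(1 - 2 * a) = 1 + -(2 - 2 * a) by ring, Real.rpow_add hi0, Real.rpow_one]
      ring
    calc (2:ℝ) ^ (-(2 - 2 * a)) * (i:ℝ) ^ (-(1 - 2 * a))
        = (i:ℝ) * (2 * (i:ℝ)) ^ (-(2 - 2 * a)) := heq
      _ ≤ ∑ j ∈ Finset.range i, F (i + j) := hcard
      _ ≤ _ := hsum_le
  · -- upper bound
    apply Real.tsum_le_of_sum_range_le (fun j => hF0 _)
    intro n
    have hstep : ∀ j : ℕ, F (i + j) ≤ 4 * ((i:ℝ) + j) ^ (-((1 - 2 * a) + 1)) := by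
      intro j
      have h1n : 1 ≤ i + j := le_trans hi (Nat.le_add_right i j)
      have := hFhigh (i + j) h1n
      have hc : ((i + j : ℕ) : ℝ) = (i:ℝ) + j := by push_cast; ring
      have he : -(2 - 2 * a) = -((1 - 2 * a) + 1) := by ring
      rw [hc, he] at this
      exact this
    calc ∑ j ∈ Finset.range n, F (i + j)
        ≤ ∑ j ∈ Finset.range n, 4 * ((i:ℝ) + j) ^ (-((1 - 2 * a) + 1)) :=
          Finset.sum_le_sum (fun j _ => hstep j)
      _ = 4 * ∑ j ∈ Finset.range n, ((i:ℝ) + j) ^ (-((1 - 2 * a) + 1)) := by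
          rw [Finset.mul_sum]
      _ ≤ 4 * ((1 + 1 / (1 - 2 * a)) * (i:ℝ) ^ (-(1 - 2 * a))) := by
          apply mul_le_mul_of_nonneg_left (tail_sum_le (1 - 2 * a) i hq0 hi1 n) (by norm_num)
      _ = 4 * (1 + 1 / (1 - 2 * a)) * (i:ℝ) ^ (-(1 - 2 * a)) := by ring
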